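/- Let N be a finitely generated group in which every conjugacy class is finite (a finitely generated FC-group). Then the set Tor(N) of torsion elements of N is a finite characteristic subgroup of N, and N/Tor(N) is isomorphic to ℤⁿ for some n ≥ 0. -/

import Mathlib

open commutatorElement

private lemma comm_central_left {G : Type*} [Group G] (a b z : G)
    (hz : z ∈ Subgroup.center G) : ⁅a * z, b⁆ = ⁅a, b⁆ := by
  have h : z * b = b * z := (Subgroup.mem_center_iff.mp hz b).symm
  simp only [commutatorElement_def, mul_inv_rev]
  rw [mul_assoc a z b, h]
  group

private lemma comm_central_right {G : Type*} [Group G] (a b z : G)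
    (hz : z ∈ Subgroup.center G) : ⁅a, b * z⁆ = ⁅a, b⁆ := by
  rw [← commutatorElement_inv, comm_central_left b a z hz, commutatorElement_inv]

/-- Structure of a finitely generated commutative group: torsion is finite and there is a
surjection onto `ℤⁿ` whose kernel is exactly the torsion. -/
private lemma aux_fg_comm {A : Type*} [CommGroup A] (hA : Group.FG A) :
    ({a : A | IsOfFinOrder a}).Finite ∧
    ∃ (n : ℕ) (ψ : A →* Multiplicative (Fin n → ℤ)),
      Function.Surjective ψ ∧ ∀ a : A, (ψ a = 1 ↔ IsOfFinOrder a) := by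
  haveI := hA
  haveI : AddGroup.FG (Additive A) := AddGroup.fg_of_group_fg
  haveI : Module.Finite ℤ (Additive A) := Module.Finite.iff_addGroup_fg.mpr ‹_›
  haveI : IsNoetherian ℤ (Additive A) := isNoetherian_of_isNoetherianRing_of_finite ℤ _
  have htor : ∀ x : Additive A,
      x ∈ Submodule.torsion ℤ (Additive A) ↔ IsOfFinAddOrder x := by
    intro x
    rw [Submodule.mem_torsion_iff]
    refine (Iff.trans ?_ (isOfFinAddOrder_iff_zsmul_eq_zero (x := x)).symm)
    simp [mem_nonZeroDivisors_iff_ne_zero]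
  haveI : Module.Finite ℤ (Submodule.torsion ℤ (Additive A)) :=
    Module.Finite.iff_fg.mpr (IsNoetherian.noetherian _)
  haveI hfinT : Finite (Submodule.torsion ℤ (Additive A)) :=
    Module.finite_of_fg_torsion _ (Submodule.torsion_isTorsion)
  have hfin : ({a : A | IsOfFinOrder a}).Finite := by
    have hset : {a : A | IsOfFinOrder a}
        = Additive.toMul '' ((Submodule.torsion ℤ (Additive A) : Set (Additive A))) := by
      ext a
      simp only [Set.mem_image, Set.mem_setOf_eq, SetLike.mem_coe]
      constructor
      · intro h
        exact ⟨Additive.ofMul a, (htor _).mpr (isOfFinAddOrder_ofMul_iff.mpr h), rfl⟩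
      · rintro ⟨x, hx, rfl⟩
        exact isOfFinAddOrder_ofMul_iff.mp ((htor _).mp hx)
    rw [hset]
    exact (Set.toFinite _).image _
  refine ⟨hfin, ?_⟩
  set Q := (Additive A ⧸ Submodule.torsion ℤ (Additive A)) with hQ
  haveI : Module.Finite ℤ Q := Module.Finite.quotient ℤ _
  let b := Module.Free.chooseBasis ℤ Q
  set n := Fintype.card (Module.Free.ChooseBasisIndex ℤ Q) with hn
  let e : Q ≃ₗ[ℤ] (Fin n → ℤ) := (b.reindex (Fintype.equivFin _)).equivFun
  let f0 : Additive A →+ (Fin n → ℤ) :=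
    (e.toLinearMap.comp (Submodule.torsion ℤ (Additive A)).mkQ).toAddMonoidHom
  refine ⟨n, AddMonoidHom.toMultiplicativeRight f0, ?_, ?_⟩
  · intro y
    obtain ⟨x, hx⟩ := (Submodule.mkQ_surjective (Submodule.torsion ℤ (Additive A)))
      (e.symm (Multiplicative.toAdd y))
    refine ⟨Additive.toMul x, ?_⟩
    simp only [AddMonoidHom.coe_toMultiplicativeRight, Function.comp_apply]
    have : f0 x = Multiplicative.toAdd y := by
      simp only [f0, LinearMap.toAddMonoidHom_coe, LinearMap.coe_comp, Function.comp_apply,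
        hx, LinearEquiv.coe_coe]
      simp
    rw [show Additive.ofMul (Additive.toMul x) = x from rfl, this]
    rfl
  · intro a
    have h1 : (AddMonoidHom.toMultiplicativeRight f0 a = 1)
        ↔ f0 (Additive.ofMul a) = 0 := Iff.rfl
    rw [h1]
    have h2 : f0 (Additive.ofMul a) = 0
        ↔ (Submodule.torsion ℤ (Additive A)).mkQ (Additive.ofMul a) = 0 := by
      simp only [f0, LinearMap.toAddMonoidHom_coe, LinearMap.coe_comp, Function.comp_apply,
        LinearEquiv.coe_coe]
      exact e.map_eq_zero_iff
    rw [h2, Submodule.mkQ_apply, Submodule.Quotient.mk_eq_zero, htor,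
      isOfFinAddOrder_ofMul_iff]

theorem fg_FC_group_structure {N : Type*} [Group N] (hfg : Group.FG N)
    (hFC : ∀ n : N, {x : N | IsConj n x}.Finite) :
    ∃ T : Subgroup N, (T : Set N) = {n : N | IsOfFinOrder n} ∧
      Finite T ∧ T.Characteristic ∧
      ∃ (n : ℕ) (φ : N →* Multiplicative (Fin n → ℤ)),
        Function.Surjective φ ∧ φ.ker = T := by
  classical
  obtain ⟨S, hS⟩ := hfg.1
  -- centralizers of single elements have finite index
  have hcent : ∀ g : N, (Subgroup.centralizer {g}).FiniteIndex := by
    intro g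
    have horb : (MulAction.orbit (ConjAct N) g).Finite := by
      refine (hFC g).subset ?_
      intro x hx
      exact (ConjAct.mem_orbit_conjAct.mp hx).symm
    haveI := horb.to_subtype
    haveI : Finite (ConjAct N ⧸ MulAction.stabilizer (ConjAct N) g) :=
      Finite.of_equiv _ (MulAction.orbitEquivQuotientStabilizer (ConjAct N) g)
    haveI : (MulAction.stabilizer (ConjAct N) g).FiniteIndex :=
      Subgroup.finiteIndex_of_finite_quotient
    rw [Subgroup.centralizer_eq_comap_stabilizer g]
    constructor
    exact (Subgroup.index_comap_of_surjective (MulAction.stabilizer (ConjAct N) g)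
      (f := ConjAct.toConjAct.toMonoidHom) (ConjAct.toConjAct.surjective)).trans_ne
      Subgroup.FiniteIndex.index_ne_zero
  -- the center has finite index
  haveI hZ : (Subgroup.center N).FiniteIndex := by
    haveI h1 : (⨅ g ∈ S, Subgroup.centralizer {g}).FiniteIndex :=
      Subgroup.finiteIndex_iInf' _ fun g _ => hcent g
    refine Subgroup.finiteIndex_of_le (H := ⨅ g ∈ S, Subgroup.centralizer {g}) ?_
    intro x hx
    simp only [Subgroup.mem_iInf] at hx
    rw [Subgroup.mem_center_iff]
    intro g
    have htop : (⊤ : Subgroup N) ≤ Subgroup.centralizer {x} := by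
      rw [← hS]
      refine (Subgroup.closure_le _).mpr ?_
      intro s hs
      rw [SetLike.mem_coe, Subgroup.mem_centralizer_iff]
      intro y hy
      rw [Set.mem_singleton_iff] at hy
      subst hy
      have := hx s hs
      rw [Subgroup.mem_centralizer_iff] at this
      exact (this s (Set.mem_singleton s)).symm
    have := htop (Subgroup.mem_top g)
    rw [Subgroup.mem_centralizer_iff] at this
    exact (this x (Set.mem_singleton x)).symm
  haveI : Finite (N ⧸ Subgroup.center N) := Subgroup.finite_quotient_of_finiteIndex
  -- finitely many commutators
  haveI hcs : Finite (commutatorSet N) := by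
    have hsub : commutatorSet N ⊆ Set.range
        (fun p : (N ⧸ Subgroup.center N) × (N ⧸ Subgroup.center N) =>
          ⁅p.1.out, p.2.out⁆) := by
      rintro x ⟨g, h, rfl⟩
      refine ⟨(QuotientGroup.mk g, QuotientGroup.mk h), ?_⟩
      obtain ⟨z1, hz1⟩ := QuotientGroup.mk_out_eq_mul (Subgroup.center N) g
      obtain ⟨z2, hz2⟩ := QuotientGroup.mk_out_eq_mul (Subgroup.center N) h
      simp only at hz1 hz2 ⊢
      rw [hz1, hz2, comm_central_right _ _ _ z2.2, comm_central_left _ _ _ z1.2]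
    exact (Set.Finite.subset (Set.finite_range _) hsub).to_subtype
  -- Schur: the commutator subgroup is finite
  haveI hcomm : Finite (commutator N) := inferInstance
  -- the abelianization is finitely generated
  have hofsurj : Function.Surjective (Abelianization.of (G := N)) := fun a =>
    ⟨Quotient.out a, Quotient.out_eq' a⟩
  have hA : Group.FG (Abelianization N) :=
    @Group.fg_of_surjective N _ _ _ hfg _ hofsurj
  obtain ⟨hfinA, n, ψ, hsurj, hψ⟩ := aux_fg_comm hA
  -- an element has finite order iff its image in the abelianization does
  have L : ∀ m : N, IsOfFinOrder (Abelianization.of m) ↔ IsOfFinOrder m := by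
    intro m
    constructor
    · intro h
      obtain ⟨k, hk, hk1⟩ := h.exists_pow_eq_one
      have h1 : m ^ k ∈ commutator N := by
        rw [← QuotientGroup.eq_one_iff]
        rw [← map_pow] at hk1
        exact hk1
      have h2 : IsOfFinOrder (⟨m ^ k, h1⟩ : commutator N) := isOfFinOrder_of_finite _
      obtain ⟨j, hj, hj1⟩ := h2.exists_pow_eq_one
      have h3 : (m ^ k) ^ j = 1 := by
        have := congrArg (Subtype.val) hj1
        simpa using this
      have h4 : IsOfFinOrder (m ^ k) :=
        isOfFinOrder_iff_pow_eq_one.mpr ⟨j, hj, h3⟩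
      exact h4.of_pow hk.ne'
    · intro h
      exact (Abelianization.of (G := N)).isOfFinOrder h
  -- the torsion subgroup
  let T : Subgroup N :=
    { carrier := {n : N | IsOfFinOrder n}
      one_mem' := IsOfFinOrder.one
      mul_mem' := by
        intro a b ha hb
        rw [Set.mem_setOf_eq, ← L, map_mul]
        exact ((L a).mpr ha).mul ((L b).mpr hb)
      inv_mem' := by
        intro a ha
        exact ha.inv }
  have hTmem : ∀ x : N, x ∈ T ↔ IsOfFinOrder x := fun _ => Iff.rfl
  refine ⟨T, rfl, ?_, ?_, ?_⟩
  · -- finiteness of T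
    have hfib : ∀ a : Abelianization N, ({m : N | Abelianization.of m = a}).Finite := by
      intro a
      by_cases hne : ∃ g : N, Abelianization.of g = a
      · obtain ⟨g, rfl⟩ := hne
        have hset : {m : N | Abelianization.of m = Abelianization.of g}
            = (fun k => g * k) '' (commutator N : Set N) := by
          ext x
          simp only [Set.mem_setOf_eq, Set.mem_image, SetLike.mem_coe]
          constructor
          · intro h
            refine ⟨g⁻¹ * x, ?_, by group⟩
            rw [← QuotientGroup.eq_one_iff]
            have : Abelianization.of (g⁻¹ * x) = 1 := by
              rw [map_mul, map_inv, h]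
              group
            exact this
          · rintro ⟨k, hk, rfl⟩
            have : Abelianization.of k = 1 := QuotientGroup.eq_one_iff k |>.mpr hk
            rw [map_mul, this, mul_one]
        rw [hset]
        exact (Set.toFinite _).image _
      · have : {m : N | Abelianization.of m = a} = ∅ := by
          ext x
          simp only [Set.mem_setOf_eq, Set.mem_empty_iff_false, iff_false]
          exact fun h => hne ⟨x, h⟩
        rw [this]
        exact Set.finite_empty
    have hTset : (T : Set N)
        = ⋃ a ∈ {a : Abelianization N | IsOfFinOrder a},
            {m : N | Abelianization.of m = a} := by
      ext x
      simp only [Set.mem_iUnion, Set.mem_setOf_eq, SetLike.mem_coe, hTmem]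
      constructor
      · intro h
        exact ⟨Abelianization.of x, (L x).mpr h, rfl⟩
      · rintro ⟨a, ha, rfl⟩
        exact (L x).mp ha
    have : (T : Set N).Finite := by
      rw [hTset]
      exact Set.Finite.biUnion hfinA fun a _ => hfib a
    exact this.to_subtype
  · -- characteristic
    constructor
    intro φ
    ext x
    rw [Subgroup.mem_comap]
    simp only [hTmem, MulEquiv.coe_toMonoidHom]
    constructor
    · intro h
      have := φ.symm.toMonoidHom.isOfFinOrder h
      simpa using this
    · intro h
      exact φ.toMonoidHom.isOfFinOrder h
  · -- the surjection onto ℤⁿ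
    refine ⟨n, ψ.comp (Abelianization.of), hsurj.comp hofsurj, ?_⟩
    ext x
    rw [MonoidHom.mem_ker, MonoidHom.comp_apply, hψ, L, hTmem]
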